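/- Let δ, γ, κ, C₀ > 0, let d ≥ 1 be an integer, and let w_a, w_b be real numbers with w_a, w_b ≥ 1. Let p, q be positive integers with p ≤ w_a^{d−1} and q ≤ w_b^{d−1}. Let λ_a, λ_b be real numbers, let μ : Fin p → ℝ and ν : Fin q → ℝ be families of positive real numbers satisfying |μ_j − λ_a| ≤ C₀/(1+ln w_a)^δ for all j and |ν_l − λ_b| ≤ C₀/(1+ln w_b)^δ for all l. Let t be a real number such that |t − λ_a + λ_b| ≥ γ(1 + |w_a − w_b|) and |t − μ_j + ν_l| ≥ κ(1 + |w_a − w_b|) for all j ∈ Fin p, l ∈ Fin q. Let A be a p × q complex matrix and define the p × q complex matrix B by B_{jl} = A_{jl}/(t − μ_j + ν_l). Then ‖B‖ ≤ exp(C_{δ,d} γ^{−1/δ}) · ‖A‖ / (κ(1 + |w_a − w_b|)), where C_{δ,d} = ((d−1)/2)·(2C₀)^{1/δ} and ‖·‖ denotes the operator norm of a matrix as a linear map between the Euclidean spaces ℂ^q → ℂ^p. -/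

import Mathlib

open scoped Matrix.Norms.L2Operator
open MeasureTheory Set Real
open scoped ComplexConjugate Matrix

/-- The operator norm of a complex `p × q` matrix viewed as a linear map
between the Euclidean spaces `ℂ^q → ℂ^p`. -/
noncomputable def matrixOpNorm {p q : ℕ} (A : Matrix (Fin p) (Fin q) ℂ) : ℝ :=
  ‖LinearMap.toContinuousLinearMap (Matrix.toEuclideanLin A)‖

lemma matrixOpNorm_eq {p q : ℕ} (A : Matrix (Fin p) (Fin q) ℂ) : matrixOpNorm A = ‖A‖ := rfl

-- diagonal opnorm bound
lemma diag_opNorm_le {n : ℕ} (d : Fin n → ℂ) (c : ℝ) (hc : 0 ≤ c) (h : ∀ i, ‖d i‖ ≤ c) :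
    ‖(Matrix.diagonal d : Matrix (Fin n) (Fin n) ℂ)‖ ≤ c := by
  rw [Matrix.l2_opNorm_def]
  apply ContinuousLinearMap.opNorm_le_bound _ hc
  intro x
  have hx : ∀ y : EuclideanSpace ℂ (Fin n), ‖y‖ = Real.sqrt (∑ i, ‖y i‖^2) := by
    intro y; rw [EuclideanSpace.norm_eq]
  rw [LinearEquiv.trans_apply, LinearMap.coe_toContinuousLinearMap']
  rw [hx, hx]
  rw [← Real.sqrt_sq hc, ← Real.sqrt_mul (by positivity)]
  apply Real.sqrt_le_sqrt
  rw [Finset.mul_sum]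
  apply Finset.sum_le_sum
  intro i _
  have : (Matrix.toEuclideanLin (Matrix.diagonal d) x) i = d i * x i := by
    simp [Matrix.toEuclideanLin_apply, Matrix.mulVec_diagonal]
  rw [this, norm_mul, mul_pow]
  have := h i
  have : ‖d i‖^2 ≤ c^2 := by nlinarith [norm_nonneg (d i)]
  nlinarith [norm_nonneg (x i), sq_nonneg (x i : ℂ).re]

lemma int_exp_neg {b : ℝ} (hb : 0 < b) :
    (∫ s in Set.Ioi (0:ℝ), Real.exp (-(b*s))) = 1/b := by
  have hderiv : ∀ s ∈ Set.Ici (0:ℝ),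
      HasDerivAt (fun s => -Real.exp (-(b*s))/b) (Real.exp (-(b*s))) s := by
    intro s _
    have h1 : HasDerivAt (fun s : ℝ => -(b*s)) (-b) s := by
      simpa using ((hasDerivAt_id s).const_mul (-b))
    have h2 := (h1.exp).neg.div_const b
    have h3 : (-(Real.exp (-(b * s)) * -b) / b) = Real.exp (-(b*s)) := by field_simp
    rw [h3] at h2
    exact h2
  have hint : IntegrableOn (fun s => Real.exp (-(b*s))) (Set.Ioi (0:ℝ)) := by
    simpa [neg_mul] using exp_neg_integrableOn_Ioi 0 hb
  have htend : Filter.Tendsto (fun s => -Real.exp (-(b*s))/b) Filter.atTop (nhds 0) := by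
    have h0 : Filter.Tendsto (fun s : ℝ => -(b*s)) Filter.atTop Filter.atBot := by
      exact Filter.tendsto_neg_atTop_atBot.comp (Filter.tendsto_id.const_mul_atTop hb)
    have h1 := (Real.tendsto_exp_atBot.comp h0).neg
    simpa [Function.comp] using h1.div_const b
  have := MeasureTheory.integral_Ioi_of_hasDerivAt_of_tendsto' hderiv hint htend
  rw [this]; field_simp; simp

set_option maxHeartbeats 1000000 in
lemma key_pos {p q : ℕ} (hp : 0 < p) (hq : 0 < q)
    (u : Fin p → ℝ) (v : Fin q → ℝ) (m : ℝ) (hm : 0 < m)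
    (huv : ∀ j l, m ≤ u j + v l)
    (A B : Matrix (Fin p) (Fin q) ℂ)
    (hB : ∀ j l, B j l = A j l / ((u j + v l : ℝ) : ℂ)) :
    ‖B‖ ≤ ‖A‖ / m := by
  have hpos : ∀ j l, 0 < u j + v l := fun j l => lt_of_lt_of_le hm (huv j l)
  set M : ℝ → Matrix (Fin p) (Fin q) ℂ := fun s =>
    Matrix.diagonal (fun j => (Real.exp (-(s * u j)) : ℂ)) * A *
      Matrix.diagonal (fun l => (Real.exp (-(s * v l)) : ℂ)) with hM
  have hMentry : ∀ s j l, M s j l = (Real.exp (-(s * (u j + v l))) : ℂ) * A j l := by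
    intro s j l
    simp only [hM, Matrix.mul_diagonal, Matrix.diagonal_mul]
    rw [show -(s * (u j + v l)) = -(s * u j) + -(s * v l) by ring, Real.exp_add]
    push_cast
    ring
  -- norm bound on M s
  obtain ⟨j0, -, hj0⟩ := Finset.exists_min_image Finset.univ u ⟨⟨0, hp⟩, Finset.mem_univ _⟩
  obtain ⟨l0, -, hl0⟩ := Finset.exists_min_image Finset.univ v ⟨⟨0, hq⟩, Finset.mem_univ _⟩
  have hMnorm : ∀ s : ℝ, 0 ≤ s → ‖M s‖ ≤ Real.exp (-(s * m)) * ‖A‖ := by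
    intro s hs
    have h1 : ‖Matrix.diagonal (fun j => (Real.exp (-(s * u j)) : ℂ))‖ ≤
        Real.exp (-(s * u j0)) := by
      apply diag_opNorm_le _ _ (Real.exp_pos _).le
      intro i
      rw [Complex.norm_real, Real.norm_eq_abs, abs_of_pos (Real.exp_pos _)]
      exact Real.exp_le_exp.2 (by nlinarith [hj0 i (Finset.mem_univ i)])
    have h2 : ‖Matrix.diagonal (fun l => (Real.exp (-(s * v l)) : ℂ))‖ ≤
        Real.exp (-(s * v l0)) := by
      apply diag_opNorm_le _ _ (Real.exp_pos _).le
      intro i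
      rw [Complex.norm_real, Real.norm_eq_abs, abs_of_pos (Real.exp_pos _)]
      exact Real.exp_le_exp.2 (by nlinarith [hl0 i (Finset.mem_univ i)])
    have h3 : ‖M s‖ ≤ ‖Matrix.diagonal (fun j => (Real.exp (-(s * u j)) : ℂ)) * A‖ *
        ‖Matrix.diagonal (fun l => (Real.exp (-(s * v l)) : ℂ))‖ := Matrix.l2_opNorm_mul _ _
    have h4 := Matrix.l2_opNorm_mul (Matrix.diagonal (fun j => (Real.exp (-(s * u j)) : ℂ))) A
    have h5 : Real.exp (-(s * u j0)) * Real.exp (-(s * v l0)) ≤ Real.exp (-(s * m)) := by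
      rw [← Real.exp_add]
      apply Real.exp_le_exp.2
      nlinarith [huv j0 l0]
    have hA := norm_nonneg A
    have e2 := Real.exp_pos (-(s * v l0))
    have n2 := norm_nonneg (Matrix.diagonal (fun l => (Real.exp (-(s * v l)) : ℂ)))
    calc ‖M s‖ ≤ _ := h3
      _ ≤ (Real.exp (-(s * u j0)) * ‖A‖) * Real.exp (-(s * v l0)) := by
          apply mul_le_mul _ h2 n2 (by positivity)
          calc ‖Matrix.diagonal (fun j => (Real.exp (-(s * u j)) : ℂ)) * A‖
              ≤ _ := h4
            _ ≤ _ := mul_le_mul_of_nonneg_right h1 hA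
      _ = Real.exp (-(s * u j0)) * Real.exp (-(s * v l0)) * ‖A‖ := by ring
      _ ≤ Real.exp (-(s * m)) * ‖A‖ := mul_le_mul_of_nonneg_right h5 hA
  -- main estimate
  rw [Matrix.l2_opNorm_def]
  apply ContinuousLinearMap.opNorm_le_bound _ (div_nonneg (norm_nonneg _) hm.le)
  intro x
  set g : ℝ → EuclideanSpace ℂ (Fin p) := fun s => Matrix.toEuclideanLin (M s) x with hg
  have gsum : ∀ s, g s = ∑ j, ∑ l,
      Real.exp (-(s * (u j + v l))) • ((A j l * x l) • EuclideanSpace.single j (1:ℂ)) := by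
    intro s
    ext i
    have lhs : g s i = ∑ l, M s i l * x l := by
      simp [hg, Matrix.toEuclideanLin_apply, Matrix.mulVec, dotProduct]
    rw [lhs]
    have : (∑ j, ∑ l, Real.exp (-(s * (u j + v l))) •
        ((A j l * x l) • EuclideanSpace.single j (1:ℂ))) i
        = ∑ j, ∑ l, Real.exp (-(s * (u j + v l))) •
          ((A j l * x l) * (if i = j then 1 else 0)) := by
      rw [WithLp.ofLp_sum, Finset.sum_apply]
      congr 1; funext j
      rw [WithLp.ofLp_sum, Finset.sum_apply]
      congr 1; funext l
      simp [EuclideanSpace.single_apply]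
    rw [this]
    rw [Finset.sum_comm]
    rw [Finset.sum_congr rfl (fun l _ => Finset.sum_eq_single i
      (fun j _ hj => by simp [Ne.symm hj]) (by simp))]
    refine Finset.sum_congr rfl fun l _ => ?_
    rw [hMentry]
    simp only [eq_self_iff_true, if_true, if_pos rfl, mul_one, Complex.real_smul]
    push_cast
    ring
  have hint_term : ∀ (j : Fin p) (l : Fin q), IntegrableOn (fun s =>
      Real.exp (-(s * (u j + v l))) • ((A j l * x l) • EuclideanSpace.single j (1:ℂ)))
      (Set.Ioi (0:ℝ)) := by
    intro j l
    have h0 : IntegrableOn (fun s => Real.exp (-((u j + v l) * s))) (Set.Ioi (0:ℝ)) := by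
      simpa only [neg_mul] using exp_neg_integrableOn_Ioi 0 (hpos j l)
    have h := h0.smul_const ((A j l * x l) • EuclideanSpace.single j (1:ℂ))
    rw [show (fun s => Real.exp (-(s * (u j + v l))) •
        ((A j l * x l) • EuclideanSpace.single j (1:ℂ))) =
      (fun s => Real.exp (-((u j + v l) * s)) •
        ((A j l * x l) • EuclideanSpace.single j (1:ℂ))) from funext fun s => by rw [mul_comm]]
    exact h
  have hgint : IntegrableOn g (Set.Ioi (0:ℝ)) := by
    have : IntegrableOn (fun s => ∑ j, ∑ l,
        Real.exp (-(s * (u j + v l))) • ((A j l * x l) • EuclideanSpace.single j (1:ℂ)))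
        (Set.Ioi (0:ℝ)) := by
      apply integrable_finset_sum
      intro j _
      apply integrable_finset_sum
      intro l _
      exact hint_term j l
    exact this.congr (Filter.Eventually.of_forall fun s => (gsum s).symm)
  have hrepr : Matrix.toEuclideanLin B x = ∫ s in Set.Ioi (0:ℝ), g s := by
    have : (∫ s in Set.Ioi (0:ℝ), g s) = ∑ j, ∑ l,
        (1 / (u j + v l)) • ((A j l * x l) • EuclideanSpace.single j (1:ℂ)) := by
      rw [integral_congr_ae (Filter.Eventually.of_forall fun s => gsum s)]
      rw [integral_finset_sum _ (fun j _ => integrable_finset_sum _ fun l _ => hint_term j l)]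
      congr 1; funext j
      rw [integral_finset_sum _ (fun l _ => hint_term j l)]
      congr 1; funext l
      rw [integral_smul_const]
      congr 1
      rw [show (fun s : ℝ => Real.exp (-(s * (u j + v l)))) =
        (fun s : ℝ => Real.exp (-((u j + v l) * s))) from funext fun s => by rw [mul_comm]]
      exact int_exp_neg (hpos j l)
    rw [this]
    ext i
    have lhs : Matrix.toEuclideanLin B x i = ∑ l, B i l * x l := by
      simp [Matrix.toEuclideanLin_apply, Matrix.mulVec, dotProduct]
    rw [lhs]
    have : (∑ j, ∑ l, (1 / (u j + v l)) •
        ((A j l * x l) • EuclideanSpace.single j (1:ℂ))) i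
        = ∑ j, ∑ l, (1 / (u j + v l)) •
          ((A j l * x l) * (if i = j then 1 else 0)) := by
      rw [WithLp.ofLp_sum, Finset.sum_apply]
      congr 1; funext j
      rw [WithLp.ofLp_sum, Finset.sum_apply]
      congr 1; funext l
      simp [EuclideanSpace.single_apply]
    rw [this]
    rw [Finset.sum_comm]
    rw [Finset.sum_congr rfl (fun l _ => Finset.sum_eq_single i
      (fun j _ hj => by simp [Ne.symm hj]) (by simp))]
    refine Finset.sum_congr rfl fun l _ => ?_
    rw [hB]
    simp only [eq_self_iff_true, if_true, if_pos rfl, mul_one, Complex.real_smul]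
    have hne : ((u i + v l : ℝ) : ℂ) ≠ 0 := Complex.ofReal_ne_zero.2 (hpos i l).ne'
    push_cast
    field_simp
  have hbound : ‖Matrix.toEuclideanLin B x‖ ≤ (1/m) * (‖A‖ * ‖x‖) := by
    rw [hrepr]
    have h := norm_integral_le_of_norm_le (G := EuclideanSpace ℂ (Fin p))
      (f := g) (g := fun s => Real.exp (-(s * m)) * (‖A‖ * ‖x‖))
      (μ := volume.restrict (Set.Ioi (0:ℝ)))
      (by
        have h0 : IntegrableOn (fun s => Real.exp (-(m * s))) (Set.Ioi (0:ℝ)) := by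
          simpa only [neg_mul] using exp_neg_integrableOn_Ioi 0 hm
        have := h0.mul_const (‖A‖ * ‖x‖)
        rw [show (fun s : ℝ => Real.exp (-(s * m)) * (‖A‖ * ‖x‖)) =
          (fun s : ℝ => Real.exp (-(m * s)) * (‖A‖ * ‖x‖)) from funext fun s => by rw [mul_comm s m]]
        exact this)
      (by
        filter_upwards [ae_restrict_mem measurableSet_Ioi] with s hs
        have h1 : ‖g s‖ ≤ ‖M s‖ * ‖x‖ := by
          rw [Matrix.l2_opNorm_def]
          exact ContinuousLinearMap.le_opNorm
            ((Matrix.toEuclideanLin.trans LinearMap.toContinuousLinearMap) (M s)) x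
        have h2 := hMnorm s (le_of_lt hs)
        have := norm_nonneg x
        nlinarith [norm_nonneg (M s), Real.exp_pos (-(s*m))])
    refine h.trans ?_
    rw [MeasureTheory.integral_mul_const]
    rw [show (fun s : ℝ => Real.exp (-(s * m))) = (fun s : ℝ => Real.exp (-(m * s))) by
      funext s; ring_nf]
    rw [int_exp_neg hm]
  calc ‖(Matrix.toEuclideanLin.trans LinearMap.toContinuousLinearMap) B x‖
      = ‖Matrix.toEuclideanLin B x‖ := rfl
    _ ≤ (1/m) * (‖A‖ * ‖x‖) := hbound
    _ = ‖A‖ / m * ‖x‖ := by ring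

-- op norm ≤ frobenius
lemma opNorm_le_frob {p q : ℕ} (A : Matrix (Fin p) (Fin q) ℂ) :
    ‖A‖ ≤ Real.sqrt (∑ j, ∑ l, ‖A j l‖^2) := by
  rw [Matrix.l2_opNorm_def]
  apply ContinuousLinearMap.opNorm_le_bound _ (Real.sqrt_nonneg _)
  intro x
  have key : ∀ j, ‖(Matrix.toEuclideanLin A x) j‖^2 ≤ (∑ l, ‖A j l‖^2) * ‖x‖^2 := by
    intro j
    have hj : (Matrix.toEuclideanLin A x) j = ∑ l, A j l * x l := by
      simp [Matrix.toEuclideanLin_apply, Matrix.mulVec, dotProduct]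
    rw [hj]
    have h1 : ‖∑ l, A j l * x l‖ ≤ ∑ l, ‖A j l‖ * ‖x l‖ := by
      refine (norm_sum_le _ _).trans ?_
      exact Finset.sum_le_sum fun l _ => by rw [norm_mul]
    have h2 : (∑ l, ‖A j l‖ * ‖x l‖)^2 ≤ (∑ l, ‖A j l‖^2) * (∑ l, ‖x l‖^2) :=
      Finset.sum_mul_sq_le_sq_mul_sq _ _ _
    have hx : ‖x‖^2 = ∑ l, ‖x l‖^2 := by
      rw [EuclideanSpace.norm_eq, Real.sq_sqrt (by positivity)]
    rw [hx]
    calc ‖∑ l, A j l * x l‖^2 ≤ (∑ l, ‖A j l‖ * ‖x l‖)^2 := by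
          apply sq_le_sq' _ h1
          nlinarith [norm_nonneg (∑ l, A j l * x l), Finset.sum_nonneg
            (fun l (_ : l ∈ Finset.univ) => mul_nonneg (norm_nonneg (A j l)) (norm_nonneg (x l)))]
      _ ≤ _ := h2
  have hnorm : ‖Matrix.toEuclideanLin A x‖^2 ≤ (∑ j, ∑ l, ‖A j l‖^2) * ‖x‖^2 := by
    rw [EuclideanSpace.norm_eq, Real.sq_sqrt (by positivity), Finset.sum_mul]
    exact Finset.sum_le_sum fun j _ => key j
  have h0 : ‖Matrix.toEuclideanLin A x‖ ≤ Real.sqrt ((∑ j, ∑ l, ‖A j l‖^2) * ‖x‖^2) := by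
    rw [← Real.sqrt_sq (norm_nonneg (Matrix.toEuclideanLin A x))]
    exact Real.sqrt_le_sqrt hnorm
  calc ‖(Matrix.toEuclideanLin.trans LinearMap.toContinuousLinearMap) A x‖
      = ‖Matrix.toEuclideanLin A x‖ := rfl
    _ ≤ _ := h0
    _ = Real.sqrt (∑ j, ∑ l, ‖A j l‖^2) * ‖x‖ := by
        rw [Real.sqrt_mul (by positivity), Real.sqrt_sq (norm_nonneg x)]

-- frobenius ≤ sqrt q * opnorm  (column version)
lemma frob_le_col {p q : ℕ} (A : Matrix (Fin p) (Fin q) ℂ) :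
    (∑ j, ∑ l, ‖A j l‖^2) ≤ (q : ℝ) * ‖A‖^2 := by
  rw [Finset.sum_comm]
  have hcol : ∀ l : Fin q, (∑ j, ‖A j l‖^2) ≤ ‖A‖^2 := by
    intro l
    have hx : Matrix.toEuclideanLin A (EuclideanSpace.single l (1:ℂ)) =
        (WithLp.toLp 2 (fun j => A j l) : EuclideanSpace ℂ (Fin p)) := by
      ext j
      simp [Matrix.toEuclideanLin_apply, Matrix.mulVec, dotProduct,
        EuclideanSpace.single_apply]
    have h1 : ‖Matrix.toEuclideanLin A (EuclideanSpace.single l (1:ℂ))‖ ≤ ‖A‖ := by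
      have := ContinuousLinearMap.le_opNorm
        ((Matrix.toEuclideanLin.trans LinearMap.toContinuousLinearMap) A)
        (EuclideanSpace.single l (1:ℂ))
      rw [EuclideanSpace.norm_single] at this
      simpa [Matrix.l2_opNorm_def] using this
    have h2 : ‖Matrix.toEuclideanLin A (EuclideanSpace.single l (1:ℂ))‖^2 = ∑ j, ‖A j l‖^2 := by
      rw [hx, EuclideanSpace.norm_eq, Real.sq_sqrt (by positivity)]
    calc (∑ j, ‖A j l‖^2) = _ := h2.symm
      _ ≤ ‖A‖^2 := by nlinarith [norm_nonneg (Matrix.toEuclideanLin A (EuclideanSpace.single l (1:ℂ))), norm_nonneg A]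
  calc (∑ l : Fin q, ∑ j, ‖A j l‖^2) ≤ ∑ l : Fin q, ‖A‖^2 := Finset.sum_le_sum fun l _ => hcol l
    _ = (q : ℝ) * ‖A‖^2 := by simp [Finset.sum_const, mul_comm]

-- row version
lemma frob_le_row {p q : ℕ} (A : Matrix (Fin p) (Fin q) ℂ) :
    (∑ j, ∑ l, ‖A j l‖^2) ≤ (p : ℝ) * ‖A‖^2 := by
  have h := frob_le_col (Aᴴ)
  rw [Matrix.l2_opNorm_conjTranspose] at h
  calc (∑ j, ∑ l, ‖A j l‖^2) = ∑ l, ∑ j, ‖Aᴴ l j‖^2 := by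
        rw [Finset.sum_comm]
        exact Finset.sum_congr rfl fun l _ => Finset.sum_congr rfl fun j _ => by
          simp [Matrix.conjTranspose_apply]
    _ ≤ _ := h

lemma frob_route {p q : ℕ} (A B : Matrix (Fin p) (Fin q) ℂ) (m : ℝ) (hm : 0 < m)
    (hent : ∀ j l, ‖B j l‖ ≤ ‖A j l‖ / m) (N : ℝ) (hN0 : 0 ≤ N)
    (hN : (∑ j, ∑ l, ‖A j l‖^2) ≤ N * ‖A‖^2) :
    ‖B‖ ≤ Real.sqrt N * ‖A‖ / m := by
  have h1 : (∑ j, ∑ l, ‖B j l‖^2) ≤ N * ‖A‖^2 / m^2 := by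
    have step : (∑ j, ∑ l, ‖B j l‖^2) ≤ (∑ j, ∑ l, ‖A j l‖^2) / m^2 := by
      rw [Finset.sum_div]
      apply Finset.sum_le_sum
      intro j _
      rw [Finset.sum_div]
      apply Finset.sum_le_sum
      intro l _
      rw [← div_pow]
      have := hent j l
      have h0 := norm_nonneg (B j l)
      have h0' : (0:ℝ) ≤ ‖A j l‖ / m := by positivity
      nlinarith
    refine step.trans ?_
    exact div_le_div_of_nonneg_right hN (by positivity)
  have h2 : ‖B‖ ≤ Real.sqrt (N * ‖A‖^2 / m^2) := (opNorm_le_frob B).trans (Real.sqrt_le_sqrt h1)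
  refine h2.trans (le_of_eq ?_)
  rw [show N * ‖A‖^2 / m^2 = (Real.sqrt N * ‖A‖ / m)^2 by
    rw [div_pow, mul_pow, Real.sq_sqrt hN0]]
  exact Real.sqrt_sq (by positivity)

set_option maxHeartbeats 1000000 in
theorem stmt0 (δ γ κ C₀ : ℝ) (hδ : 0 < δ) (hγ : 0 < γ) (hκ : 0 < κ) (hC₀ : 0 < C₀)
    (d : ℕ) (hd : 1 ≤ d) (wa wb : ℝ) (hwa : 1 ≤ wa) (hwb : 1 ≤ wb)
    (p q : ℕ) (hp : 0 < p) (hq : 0 < q)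
    (hpw : (p : ℝ) ≤ wa ^ (d - 1)) (hqw : (q : ℝ) ≤ wb ^ (d - 1))
    (lamA lamB : ℝ) (μ : Fin p → ℝ) (ν : Fin q → ℝ)
    (hμpos : ∀ j, 0 < μ j) (hνpos : ∀ l, 0 < ν l)
    (hμ : ∀ j, |μ j - lamA| ≤ C₀ / (1 + Real.log wa) ^ δ)
    (hν : ∀ l, |ν l - lamB| ≤ C₀ / (1 + Real.log wb) ^ δ)
    (t : ℝ)
    (ht1 : γ * (1 + |wa - wb|) ≤ |t - lamA + lamB|)
    (ht2 : ∀ j l, κ * (1 + |wa - wb|) ≤ |t - μ j + ν l|)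
    (A B : Matrix (Fin p) (Fin q) ℂ)
    (hB : ∀ j l, B j l = A j l / ((t - μ j + ν l : ℝ) : ℂ)) :
    matrixOpNorm B ≤
      Real.exp (((d : ℝ) - 1) / 2 * (2 * C₀) ^ (1 / δ) * γ ^ (-(1 / δ))) * matrixOpNorm A /
        (κ * (1 + |wa - wb|)) := by
  set m : ℝ := κ * (1 + |wa - wb|) with hmdef
  have hm : 0 < m := by positivity
  set Cexp : ℝ := ((d : ℝ) - 1) / 2 * (2 * C₀) ^ (1 / δ) * γ ^ (-(1 / δ)) with hCexp
  have hd1 : (0:ℝ) ≤ (d : ℝ) - 1 := by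
    have : (1:ℝ) ≤ (d:ℝ) := by exact_mod_cast hd
    linarith
  have hCexp0 : 0 ≤ Cexp := by
    apply mul_nonneg (mul_nonneg (by linarith) (Real.rpow_nonneg (by linarith) _))
    exact Real.rpow_nonneg hγ.le _
  have hE : (1:ℝ) ≤ Real.exp Cexp := Real.one_le_exp hCexp0
  rw [matrixOpNorm_eq, matrixOpNorm_eq]
  -- it suffices to establish `‖B‖ ≤ exp Cexp * ‖A‖ / m`
  by_cases hallpos : ∀ j l, 0 < t - μ j + ν l
  · have h := key_pos hp hq (fun j => t - μ j) ν m hm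
      (fun j l => by
        have := ht2 j l
        rwa [abs_of_pos (hallpos j l)] at this)
      A B (fun j l => hB j l)
    refine h.trans ?_
    gcongr
    exact le_mul_of_one_le_left (norm_nonneg A) hE
  · by_cases hallneg : ∀ j l, t - μ j + ν l < 0
    · have h := key_pos hp hq (fun j => μ j - t) (fun l => -ν l) m hm
        (fun j l => by
          have h2 := ht2 j l
          rw [abs_of_neg (hallneg j l)] at h2
          simpa [neg_add, neg_sub] using by linarith [h2] : ∀ j l, m ≤ (μ j - t) + -ν l)
        (-A) B
        (fun j l => by
          rw [hB j l, show ((μ j - t + -ν l : ℝ) : ℂ) = -((t - μ j + ν l : ℝ) : ℂ) by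
            push_cast; ring, Matrix.neg_apply, neg_div_neg_eq])
      rw [norm_neg] at h
      refine h.trans ?_
      gcongr
      exact le_mul_of_one_le_left (norm_nonneg A) hE
    · -- mixed sign case
      push_neg at hallpos hallneg
      obtain ⟨j1, l1, hx1⟩ := hallpos
      obtain ⟨j2, l2, hx2⟩ := hallneg
      set T : ℝ := t - lamA + lamB with hT
      set ea : ℝ := C₀ / (1 + Real.log wa) ^ δ with hea
      set eb : ℝ := C₀ / (1 + Real.log wb) ^ δ with heb
      have hdiff : ∀ j l, |T - (t - μ j + ν l)| ≤ ea + eb := by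
        intro j l
        have : T - (t - μ j + ν l) = (μ j - lamA) - (ν l - lamB) := by ring
        rw [this]
        exact (abs_sub _ _).trans (add_le_add (hμ j) (hν l))
      have hTabs : |T| ≤ ea + eb := by
        rcases le_or_gt 0 T with h | h
        · have h1 := hdiff j1 l1
          have h2 := abs_le.1 h1
          rw [abs_of_nonneg h] ; linarith [h2.2]
        · have h1 := hdiff j2 l2
          have h2 := abs_le.1 h1
          rw [abs_of_neg h] ; linarith [h2.1]
      have hgle : γ * (1 + |wa - wb|) ≤ ea + eb := le_trans ht1 hTabs
      -- entrywise bound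
      have hent : ∀ j l, ‖B j l‖ ≤ ‖A j l‖ / m := by
        intro j l
        rw [hB j l, norm_div, Complex.norm_real, Real.norm_eq_abs]
        have h2 := ht2 j l
        have habs : 0 < |t - μ j + ν l| := lt_of_lt_of_le hm h2
        exact div_le_div_of_nonneg_left (norm_nonneg _) hm h2
      -- set up for both symmetric cases
      have main : ∀ w : ℝ, 1 ≤ w → γ * (1 + |wa - wb|) ≤ 2 * (C₀ / (1 + Real.log w) ^ δ) →
          Real.sqrt ((w ^ (d-1) : ℝ)) ≤ Real.exp Cexp := by
        intro w hw hle
        have hlw : 0 ≤ Real.log w := Real.log_nonneg hw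
        have haw : (1:ℝ) ≤ 1 + Real.log w := by linarith
        have hawpos : (0:ℝ) < 1 + Real.log w := by linarith
        have hawd : (0:ℝ) < (1 + Real.log w) ^ δ := Real.rpow_pos_of_pos hawpos _
        have h1 : γ ≤ 2 * C₀ / (1 + Real.log w) ^ δ := by
          have habs : (0:ℝ) ≤ |wa - wb| := abs_nonneg _
          have hx : γ ≤ γ * (1 + |wa - wb|) := by nlinarith
          have hfin := hx.trans hle
          rw [mul_div_assoc]
          exact hfin
        have h2 : (1 + Real.log w) ^ δ ≤ 2 * C₀ / γ := by
          rw [le_div_iff₀ hγ] ; rw [le_div_iff₀ hawd] at h1 ; linarith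
        have h3 : 1 + Real.log w ≤ (2 * C₀ / γ) ^ (1/δ) := by
          have := Real.rpow_le_rpow hawd.le h2 (by positivity : (0:ℝ) ≤ 1/δ)
          rwa [← Real.rpow_mul hawpos.le, mul_one_div, div_self hδ.ne', Real.rpow_one] at this
        have hK : (2 * C₀ / γ) ^ (1/δ) = (2 * C₀) ^ (1/δ) * γ ^ (-(1/δ)) := by
          rw [Real.div_rpow (by linarith) hγ.le, Real.rpow_neg hγ.le, div_eq_mul_inv]
        have hlogw : Real.log w ≤ (2 * C₀) ^ (1/δ) * γ ^ (-(1/δ)) := by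
          rw [← hK]; linarith
        -- now sqrt(w^(d-1)) = exp((d-1) * log w / 2) ≤ exp Cexp
        have hwpow : (w : ℝ) ^ (d-1) = Real.exp (((d-1 : ℕ) : ℝ) * Real.log w) := by
          rw [← Real.log_pow, Real.exp_log (by positivity)]
        rw [hwpow, ← Real.exp_half]
        apply Real.exp_le_exp.2
        have hcast : ((d - 1 : ℕ) : ℝ) = (d : ℝ) - 1 := by
          rw [Nat.cast_sub hd]; norm_num
        rw [hcast, hCexp]
        have hfin := mul_le_mul_of_nonneg_left hlogw (by linarith : (0:ℝ) ≤ ((d:ℝ)-1)/2)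
        linarith
      rcases le_total wa wb with hw | hw
      · -- wa smaller : use rows (p)
        have hmono : eb ≤ ea := by
          rw [hea, heb]
          apply div_le_div_of_nonneg_left hC₀.le (Real.rpow_pos_of_pos (by
            linarith [Real.log_nonneg hwa]) _)
          apply Real.rpow_le_rpow (by linarith [Real.log_nonneg hwa]) _ hδ.le
          have := Real.log_le_log (by linarith) hw
          linarith
        have h2 : γ * (1 + |wa - wb|) ≤ 2 * (C₀ / (1 + Real.log wa) ^ δ) := by
          rw [hea] at hgle hmono; linarith [hgle, hmono]
        have hsq := main wa hwa h2
        have hpsq : Real.sqrt p ≤ Real.exp Cexp := by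
          refine le_trans ?_ hsq
          exact Real.sqrt_le_sqrt hpw
        have h := frob_route A B m hm hent p (by positivity) (frob_le_row A)
        refine h.trans ?_
        gcongr
      · -- wb smaller : use cols (q)
        have hmono : ea ≤ eb := by
          rw [hea, heb]
          apply div_le_div_of_nonneg_left hC₀.le (Real.rpow_pos_of_pos (by
            linarith [Real.log_nonneg hwb]) _)
          apply Real.rpow_le_rpow (by linarith [Real.log_nonneg hwb]) _ hδ.le
          have := Real.log_le_log (by linarith) hw
          linarith
        have h2 : γ * (1 + |wa - wb|) ≤ 2 * (C₀ / (1 + Real.log wb) ^ δ) := by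
          rw [heb] at hgle hmono; linarith [hgle, hmono]
        have hsq := main wb hwb h2
        have hqsq : Real.sqrt q ≤ Real.exp Cexp := by
          refine le_trans ?_ hsq
          exact Real.sqrt_le_sqrt hqw
        have h := frob_route A B m hm hent q (by positivity) (frob_le_col A)
        refine h.trans ?_
        gcongr
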